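/- The family of F-linear endomorphisms (σ̄^0, σ̄^1, …, σ̄^{n−1}) of L is an L-basis of End_F(L), where End_F(L) is regarded as an L-module via (a·f)(x) = a·f(x) for a ∈ L. -/

import Mathlib

/-- A Ferrers diagram of order `n`, given by its column heights
`c 0 ≤ c 1 ≤ … ≤ c (n-1) ≤ n` (so `c j` is the number of dots in the (j+1)-st column). -/
def IsFerrersDiagram (n : ℕ) (c : Fin n → ℕ) : Prop :=
  Monotone c ∧ ∀ i, c i ≤ n

/-- Extension of the column-height function to `ℕ`, by zero. -/
def colExt (n : ℕ) (c : Fin n → ℕ) : ℕ → ℕ :=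
  fun k => if h : k < n then c ⟨k, h⟩ else 0

/-- `ν_j(D,d) = Σ_{i=1}^{n-j} max{0, c_i - d + 1 + j}` (truncated subtraction gives the max). -/
def nuJ (n d j : ℕ) (c : Fin n → ℕ) : ℕ :=
  ∑ i ∈ Finset.range (n - j), (colExt n c i + 1 + j - d)

/-- `ν_min(D,d) = min{ν_j(D,d) : 0 ≤ j ≤ d-1}`. -/
noncomputable def nuMin (n d : ℕ) (c : Fin n → ℕ) : ℕ :=
  sInf {k | ∃ j < d, k = nuJ n d j c}

/-- A Ferrers diagram is monotone if `c (i+1) > c i` whenever `0 < c i < n`. -/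
def DiagMonotone (n : ℕ) (c : Fin n → ℕ) : Prop :=
  ∀ i : Fin n, ∀ hi : (i : ℕ) + 1 < n, 0 < c i → c i < n → c i < c ⟨(i : ℕ) + 1, hi⟩

/-- A Ferrers diagram is convex if `c (i+1) - c i ≤ 1` for all `i`. -/
def DiagConvex (n : ℕ) (c : Fin n → ℕ) : Prop :=
  ∀ i : Fin n, ∀ hi : (i : ℕ) + 1 < n, c ⟨(i : ℕ) + 1, hi⟩ ≤ c i + 1

/-- A Ferrers diagram is strictly monotone if `c (i+1) > c i` whenever `c i > 0`. -/
def DiagStrictlyMonotone (n : ℕ) (c : Fin n → ℕ) : Prop :=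
  ∀ i : Fin n, ∀ hi : (i : ℕ) + 1 < n, 0 < c i → c i < c ⟨(i : ℕ) + 1, hi⟩

/-- A Ferrers diagram is initially convex if `c 1 ≤ 1` and `c (i+1) - c i ≤ 1` for all `i`. -/
def DiagInitiallyConvex (n : ℕ) (c : Fin n → ℕ) : Prop :=
  (∀ h : 0 < n, c ⟨0, h⟩ ≤ 1) ∧ DiagConvex n c

/-- `h` is an admissible `p`-height for the Ferrers diagram `c`: `p^h ∣ n`, `p^h ∣ c i` for
all `i`, and `c (n-r) = c (n-s)` (1-indexed) whenever `r, s` lie in the same block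
`{Q p^h, …, (Q+1) p^h - 1}`. -/
def HeightOK (p n h : ℕ) (c : Fin n → ℕ) : Prop :=
  p ^ h ∣ n ∧ (∀ i, p ^ h ∣ c i) ∧
    ∀ r s : Fin n, (r : ℕ) / p ^ h = (s : ℕ) / p ^ h →
      c ⟨n - 1 - (r : ℕ), by have := r.isLt; omega⟩ =
        c ⟨n - 1 - (s : ℕ), by have := s.isLt; omega⟩

/-- The `p`-height of a Ferrers diagram: the largest admissible `h`. -/
noncomputable def pHeight (p n : ℕ) (c : Fin n → ℕ) : ℕ :=
  sSup {h | HeightOK p n h c}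

/-- The `p`-contraction of a Ferrers diagram: `c'_i = c_{p^h i} / p^h` (1-indexed),
a diagram of order `n / p^h`, where `h` is the `p`-height. -/
noncomputable def pContraction (p n : ℕ) (c : Fin n → ℕ) :
    Fin (n / p ^ pHeight p n c) → ℕ :=
  fun i => colExt n c (p ^ pHeight p n c * ((i : ℕ) + 1) - 1) / p ^ pHeight p n c

/-- A Ferrers diagram is `p`-monotone if its `p`-contraction is monotone. -/
def IsPMonotone (p n : ℕ) (c : Fin n → ℕ) : Prop :=
  DiagMonotone (n / p ^ pHeight p n c) (pContraction p n c)

/-- A Ferrers diagram is `p`-convex if its `p`-contraction is convex. -/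
def IsPConvex (p n : ℕ) (c : Fin n → ℕ) : Prop :=
  DiagConvex (n / p ^ pHeight p n c) (pContraction p n c)

/-- A Ferrers diagram is strictly `p`-monotone if its `p`-contraction is strictly monotone. -/
def IsStrictlyPMonotone (p n : ℕ) (c : Fin n → ℕ) : Prop :=
  DiagStrictlyMonotone (n / p ^ pHeight p n c) (pContraction p n c)

/-- A Ferrers diagram is initially `p`-convex if its `p`-contraction is initially convex. -/
def IsInitiallyPConvex (p n : ℕ) (c : Fin n → ℕ) : Prop :=
  DiagInitiallyConvex (n / p ^ pHeight p n c) (pContraction p n c)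

/-- The adjoint Ferrers diagram: column `j+1` of `D^⊤` has `#{i : c i ≥ n - j}` dots. -/
def adjointDiag (n : ℕ) (c : Fin n → ℕ) : Fin n → ℕ :=
  fun j => (Finset.univ.filter (fun i : Fin n => n - (j : ℕ) ≤ c i)).card

/-- `|D ∩ Δ_{i+1}^n|`: the number of dots of `D` on the (i+1)-st diagonal (0-indexed `i`). -/
def diagDots (n : ℕ) (c : Fin n → ℕ) (i : ℕ) : ℕ :=
  ((Finset.range n).filter (fun r => r + i < n ∧ r < colExt n c (r + i))).card

/-- The pair `(D, d)` is MDS-constructible if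
`ν_min(D,d) = Σ_{i=1}^n max{0, |D ∩ Δ_i^n| - d + 1}`. -/
def IsMDSConstructibleP (n d : ℕ) (c : Fin n → ℕ) : Prop :=
  nuMin n d c = ∑ i ∈ Finset.range n, (diagDots n c i + 1 - d)

/-- `σ̄ = σ - id`, as an `F`-linear endomorphism of `L`. -/
def sbar {F L : Type*} [Field F] [Field L] [Algebra F L] (σ : L ≃ₐ[F] L) :
    L →ₗ[F] L :=
  σ.toLinearMap - LinearMap.id

/-- `(σ̄^0, σ̄^1, …, σ̄^{n-1})` is an `L`-basis of `End_F(L)`,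
where `End_F(L) = L →ₗ[F] L` carries the `L`-module structure `(a • f) x = a • f x`. -/
theorem statement1 {p m : ℕ} (hp : p.Prime) (hm : 1 ≤ m)
    {F L : Type*} [Field F] [Field L] [Algebra F L] [IsGalois F L] [FiniteDimensional F L]
    [CharP F p] (hn : Module.finrank F L = p ^ m)
    (σ : L ≃ₐ[F] L) (hσ : ∀ τ : L ≃ₐ[F] L, τ ∈ Subgroup.zpowers σ) :
    LinearIndependent L (fun i : Fin (p ^ m) => (sbar σ ^ (i : ℕ) : L →ₗ[F] L)) ∧
      Submodule.span L
        (Set.range (fun i : Fin (p ^ m) => (sbar σ ^ (i : ℕ) : L →ₗ[F] L))) = ⊤ := by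
  
  have hn0 : 0 < p ^ m := pow_pos hp.pos m
  have : Fact (1 < p ^ m) := ⟨Nat.one_lt_pow (by omega) hp.one_lt⟩
  -- order of σ is p ^ m
  have hord : orderOf σ = p ^ m := by
    rw [orderOf_eq_card_of_forall_mem_zpowers hσ,
      IsGalois.card_aut_eq_finrank, hn]
  -- the linear maps of σ ^ i, i < p ^ m, are linearly independent over L
  have hinj : Function.Injective
      (fun i : Fin (p ^ m) => ((σ ^ (i : ℕ) : L ≃ₐ[F] L) : L →ₐ[F] L)) := by
    intro i j hij
    have h1 : (σ ^ (i : ℕ) : L ≃ₐ[F] L) = σ ^ (j : ℕ) := by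
      ext x; exact DFunLike.congr_fun hij x
    exact Fin.ext (pow_injOn_Iio_orderOf (by simpa [hord] using i.isLt)
      (by simpa [hord] using j.isLt) h1)
  have hli : LinearIndependent L
      (fun i : Fin (p ^ m) => ((σ ^ (i : ℕ) : L ≃ₐ[F] L) : L →ₐ[F] L).toLinearMap) :=
    (linearIndependent_toLinearMap F L L).comp _ hinj
  have hfin : Module.finrank L (L →ₗ[F] L) = p ^ m :=
    (Module.finrank_linearMap_self F L L).trans hn
  have hcard : Fintype.card (Fin (p ^ m)) = Module.finrank L (L →ₗ[F] L) := by
    simp [hfin]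
  -- span of the σ ^ i is everything
  have hspan1 : Submodule.span L (Set.range
      (fun i : Fin (p ^ m) => ((σ ^ (i : ℕ) : L ≃ₐ[F] L) : L →ₐ[F] L).toLinearMap)) = ⊤ :=
    hli.span_eq_top_of_card_eq_finrank hcard
  -- σ ^ i as linear map equals σ.toLinearMap ^ i
  have hpow : ∀ i : ℕ, ((σ ^ i : L ≃ₐ[F] L) : L →ₐ[F] L).toLinearMap
      = (σ.toLinearMap ^ i : L →ₗ[F] L) := by
    intro i
    induction i with
    | zero => ext x; simp
    | succ k ih =>
      ext x
      have : (σ ^ (k + 1) : L ≃ₐ[F] L) x = (σ ^ k : L ≃ₐ[F] L) (σ x) := by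
        rw [pow_succ]; rfl
      simp only [pow_succ, AlgHom.toLinearMap_apply, Module.End.mul_apply, ← ih]
      simpa using this
  -- σ.toLinearMap = sbar σ + 1
  have hsb : σ.toLinearMap = sbar σ + 1 := by
    rw [sbar, ← Module.End.one_eq_id]
    abel
  -- hence each σ ^ i lies in the span of the sbar powers
  have hspan2 : (⊤ : Submodule L (L →ₗ[F] L)) ≤ Submodule.span L
      (Set.range (fun i : Fin (p ^ m) => (sbar σ ^ (i : ℕ) : L →ₗ[F] L))) := by
    rw [← hspan1, Submodule.span_le]
    rintro - ⟨i, rfl⟩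
    dsimp only
    rw [hpow, hsb, (Commute.one_right (sbar σ)).add_pow]
    refine Submodule.sum_mem _ fun k hk => ?_
    rw [Finset.mem_range] at hk
    have hki : k < p ^ m := lt_of_lt_of_le hk (Nat.succ_le_of_lt i.isLt)
    have : sbar σ ^ k * 1 ^ ((i : ℕ) - k) * ((i : ℕ).choose k : L →ₗ[F] L)
        = ((i : ℕ).choose k) • (sbar σ ^ k) := by
      rw [one_pow, mul_one, ← (Nat.cast_commute ((i : ℕ).choose k) (sbar σ ^ k)).eq,
        nsmul_eq_mul]
    rw [this]
    exact Submodule.smul_of_tower_mem _ _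
      (Submodule.subset_span ⟨⟨k, hki⟩, rfl⟩)
  have hsp : Submodule.span L
      (Set.range (fun i : Fin (p ^ m) => (sbar σ ^ (i : ℕ) : L →ₗ[F] L))) = ⊤ :=
    top_le_iff.mp hspan2
  exact ⟨linearIndependent_of_top_le_span_of_card_eq_finrank hspan2 hcard, hsp⟩
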